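/- If there exist a k-SCHGDD of type (n, (gw)^t) and a k-SCHGDD of type (n, g^w), then there exists a k-SCHGDD of type (n, g^{wt}). -/
import Mathlib


/-- The multiset of differences `Δ_{ij}(B)`: for each base block `b ∈ B`, all differences
`x − y` over ordered pairs of distinct points `(i,x), (j,y) ∈ b`. -/
def blockDelta {n M : ℕ} (B : Multiset (Finset (Fin n × ZMod M))) (i j : Fin n) :
    Multiset (ZMod M) :=
  B.bind (fun b =>
    ((b.val ×ˢ b.val).filter (fun p => p.1.1 = i ∧ p.2.1 = j ∧ p.1 ≠ p.2)).map
      (fun p => p.1.2 - p.2.2))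

/-- The subgroup `S = {0, t, …, (m−1)t}` of `Z_{mt}` as a multiset. -/
def holeMultiples (m t : ℕ) : Multiset (ZMod (m * t)) :=
  (Multiset.range m).map (fun c => ((c * t : ℕ) : ZMod (m * t)))

/-- The multiset `Z_{mt} \ S`, each element once. -/
def nonHoleDiffs (m t : ℕ) : Multiset (ZMod (m * t)) :=
  ((Multiset.range (m * t)).map (fun z => (z : ZMod (m * t)))).filter
    (fun z => z ∉ holeMultiples m t)

/-- A semi-cyclic `k`-HGDD of type `(n, m^t)`, given by its multiset `B` of base blocks
(`k`-subsets of `I_n × Z_{mt}`): developing by `+1` on second coordinates yields a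
`k`-HGDD with groups `{i} × Z_{mt}` and holes `I_n × (S + l)`; equivalently,
`Δ_{ij}(B) = Z_{mt} \ S` for `i ≠ j` and `Δ_{ii}(B) = ∅`. -/
def IsSCHGDD (k n m t : ℕ) (B : Multiset (Finset (Fin n × ZMod (m * t)))) : Prop :=
  (∀ b ∈ B, b.card = k) ∧
  (∀ i j : Fin n, i ≠ j → blockDelta B i j = nonHoleDiffs m t) ∧
  (∀ i : Fin n, blockDelta B i i = 0)

open Multiset Function

lemma aux_map_sprod {α β γ δ : Type*} (f : α → γ) (g : β → δ) (s : Multiset α) (t : Multiset β) :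
    (s.map f) ×ˢ (t.map g) = (s ×ˢ t).map (Prod.map f g) := by
  induction s using Multiset.induction with
  | empty => simp [Multiset.zero_product]
  | cons a s ih =>
      simp [Multiset.cons_product, ih, Multiset.map_map, Function.comp_def]

lemma blockDelta_map {n M M' : ℕ} (B : Multiset (Finset (Fin n × ZMod M)))
    (φ : ZMod M → ZMod M') (hinj : Function.Injective φ)
    (hsub : ∀ a b : ZMod M, φ (a - b) = φ a - φ b) (i j : Fin n) :
    blockDelta (B.map (fun b => b.map ⟨Prod.map id φ, injective_id.prodMap hinj⟩)) i j
      = (blockDelta B i j).map φ := by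
  unfold blockDelta
  rw [Multiset.map_bind, Multiset.bind_map]
  refine Multiset.bind_congr (fun b _ => ?_)
  rw [Finset.map_val, aux_map_sprod, Multiset.filter_map, Multiset.map_map, Multiset.map_map]
  rw [Multiset.filter_congr (q := fun p => p.1.1 = i ∧ p.2.1 = j ∧ p.1 ≠ p.2) ?_]
  · refine Multiset.map_congr rfl (fun p _ => ?_)
    simp [Prod.map, hsub]
  · intro p _
    simp only [Function.comp_apply, Prod.map, id]
    constructor
    · rintro ⟨h1, h2, h3⟩
      refine ⟨h1, h2, fun h => h3 (by rw [h])⟩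
    · rintro ⟨h1, h2, h3⟩
      refine ⟨h1, h2, fun h => h3 ?_⟩
      exact (injective_id.prodMap hinj) h

lemma blockDelta_add {n M : ℕ} (X Y : Multiset (Finset (Fin n × ZMod M))) (i j : Fin n) :
    blockDelta (X + Y) i j = blockDelta X i j + blockDelta Y i j :=
  Multiset.add_bind _ _ _

lemma nonHoleDiffs_eq (m t : ℕ) : nonHoleDiffs m t =
    ((Multiset.range (m * t)).map (fun a : ℕ => (a : ZMod (m * t)))).filter
      (fun z => z ∉ holeMultiples m t) := by
  rw [nonHoleDiffs]
  simp only [Multiset.map_id', Multiset.bind_def, Multiset.pure_def, Multiset.bind_singleton]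

lemma nonHoleDiffs_eq_zero {m t : ℕ} (h : m * t = 0) : nonHoleDiffs m t = 0 := by
  refine Multiset.eq_zero_of_forall_notMem (fun z hz => ?_)
  rw [nonHoleDiffs_eq, Multiset.mem_filter, Multiset.mem_map] at hz
  obtain ⟨⟨a, ha, _⟩, _⟩ := hz
  rw [Multiset.mem_range] at ha
  omega

lemma mem_nonHoleDiffs {m t : ℕ} (hmt : 0 < m * t) (z : ZMod (m * t)) :
    z ∈ nonHoleDiffs m t ↔ ¬ t ∣ z.val := by
  haveI : NeZero (m * t) := ⟨hmt.ne'⟩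
  have ht : 0 < t := Nat.pos_of_ne_zero (fun h => by rw [h, mul_zero] at hmt; exact lt_irrefl 0 hmt)
  have hz : z ∈ (Multiset.range (m * t)).map (fun a : ℕ => (a : ZMod (m * t))) :=
    Multiset.mem_map.mpr ⟨z.val, Multiset.mem_range.mpr (ZMod.val_lt z), ZMod.natCast_zmod_val z⟩
  rw [nonHoleDiffs_eq, Multiset.mem_filter]
  simp only [hz, true_and]
  refine not_congr ?_
  rw [holeMultiples]
  constructor
  · intro hmem
    obtain ⟨c, hc, hzc⟩ := Multiset.mem_map.mp hmem
    rw [Multiset.mem_range] at hc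
    have hlt : c * t < m * t := mul_lt_mul_of_pos_right hc ht
    have hv : z.val = c * t := by rw [← hzc, ZMod.val_cast_of_lt hlt]
    rw [hv]
    exact dvd_mul_left t c
  · rintro ⟨u, hu⟩
    have hval : z.val < m * t := ZMod.val_lt z
    have hum : u < m := by
      by_contra hum
      push_neg at hum
      have : m * t ≤ t * u := by
        calc m * t = t * m := Nat.mul_comm m t
        _ ≤ t * u := Nat.mul_le_mul_left t hum
      omega
    refine Multiset.mem_map.mpr ⟨u, Multiset.mem_range.mpr hum, ?_⟩
    rw [show u * t = z.val by rw [hu]; ring, ZMod.natCast_zmod_val]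

lemma nodup_nonHoleDiffs (m t : ℕ) : (nonHoleDiffs m t).Nodup := by
  rw [nonHoleDiffs_eq]
  refine Multiset.Nodup.filter _ (Multiset.Nodup.map_on ?_ (Multiset.nodup_range _))
  intro x hx y hy hxy
  rw [Multiset.mem_range] at hx hy
  have := congrArg ZMod.val hxy
  rwa [ZMod.val_cast_of_lt hx, ZMod.val_cast_of_lt hy] at this

/-- If there exist a `k`-SCHGDD of type `(n, (gw)^t)` and a `k`-SCHGDD of type `(n, g^w)`,
then there exists a `k`-SCHGDD of type `(n, g^{wt})`. -/
theorem schgdd_filling (k n g w t : ℕ)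
    (h1 : ∃ B : Multiset (Finset (Fin n × ZMod (g * w * t))), IsSCHGDD k n (g * w) t B)
    (h2 : ∃ B : Multiset (Finset (Fin n × ZMod (g * w))), IsSCHGDD k n g w B) :
    ∃ B : Multiset (Finset (Fin n × ZMod (g * (w * t)))), IsSCHGDD k n g (w * t) B := by
  obtain ⟨B1, hB1k, hB1d, hB1z⟩ := h1
  obtain ⟨B2, hB2k, hB2d, hB2z⟩ := h2
  have hMeq : g * w * t = g * (w * t) := mul_assoc g w t
  set c : ZMod (g * w * t) ≃+* ZMod (g * (w * t)) := ZMod.ringEquivCongr hMeq with hc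
  have hcinj : Function.Injective (c : ZMod (g * w * t) → ZMod (g * (w * t))) := c.injective
  have hcsub : ∀ a b : ZMod (g * w * t), c (a - b) = c a - c b := fun a b => map_sub c a b
  rcases Nat.eq_zero_or_pos (g * w * t) with h0 | hpos
  · refine ⟨B1.map (fun b => b.map ⟨Prod.map id c, injective_id.prodMap hcinj⟩), ?_, ?_, ?_⟩
    · intro b hb
      obtain ⟨a, ha, rfl⟩ := Multiset.mem_map.mp hb
      rw [Finset.card_map]
      exact hB1k a ha
    · intro i j hij
      rw [blockDelta_map _ _ hcinj hcsub, hB1d i j hij,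
        nonHoleDiffs_eq_zero h0, nonHoleDiffs_eq_zero (hMeq ▸ h0)]
      simp
    · intro i
      rw [blockDelta_map _ _ hcinj hcsub, hB1z i]
      simp
  · haveI : NeZero (g * w * t) := ⟨hpos.ne'⟩
    have hpos' : 0 < g * (w * t) := hMeq ▸ hpos
    haveI : NeZero (g * (w * t)) := ⟨hpos'.ne'⟩
    have hgw : 0 < g * w :=
      Nat.pos_of_ne_zero (fun h => by rw [h, zero_mul] at hpos; exact lt_irrefl 0 hpos)
    haveI : NeZero (g * w) := ⟨hgw.ne'⟩
    have ht : 0 < t :=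
      Nat.pos_of_ne_zero (fun h => by rw [h, mul_zero] at hpos; exact lt_irrefl 0 hpos)
    set φ : ZMod (g * w) → ZMod (g * (w * t)) :=
      fun x => c ((x.val * t : ℕ) : ZMod (g * w * t)) with hφ
    -- key congruence for φ's additivity
    have key : ∀ u v : ℕ, (u : ZMod (g * w)) = (v : ZMod (g * w)) →
        ((u * t : ℕ) : ZMod (g * w * t)) = ((v * t : ℕ) : ZMod (g * w * t)) := by
      intro u v h
      rw [ZMod.natCast_eq_natCast_iff] at h ⊢
      exact h.mul_right' t
    have hφsub : ∀ a b : ZMod (g * w), φ (a - b) = φ a - φ b := by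
      intro a b
      rw [eq_sub_iff_add_eq, hφ]
      simp only []
      rw [← _root_.map_add c]
      congr 1
      rw [show ((((a - b).val * t : ℕ)) : ZMod (g * w * t)) + (((b.val * t : ℕ)) : ZMod (g * w * t))
          = ((((a - b).val + b.val) * t : ℕ) : ZMod (g * w * t)) by push_cast; ring]
      refine key _ _ ?_
      push_cast [ZMod.natCast_zmod_val]
      exact sub_add_cancel a b
    have hφval : ∀ x : ZMod (g * w), (φ x).val = x.val * t := by
      intro x
      have hlt : x.val * t < g * (w * t) := by
        rw [← hMeq]; exact mul_lt_mul_of_pos_right (ZMod.val_lt x) ht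
      have hx : φ x = ((x.val * t : ℕ) : ZMod (g * (w * t))) := by
        rw [hφ]; exact map_natCast c _
      rw [hx, ZMod.val_cast_of_lt hlt]
    have hφinj : Function.Injective φ := by
      intro x y hxy
      have h1 := congrArg ZMod.val hxy
      rw [hφval, hφval] at h1
      exact ZMod.val_injective _ (Nat.eq_of_mul_eq_mul_right ht h1)
    have hcval : ∀ x : ZMod (g * w * t), ((c : ZMod (g * w * t) → ZMod (g * (w * t))) x).val = x.val := by
      intro x
      conv_lhs => rw [← ZMod.natCast_zmod_val x]
      rw [map_natCast c,
        ZMod.val_cast_of_lt (by rw [← hMeq]; exact ZMod.val_lt x)]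
    -- membership characterizations
    have hmem1 : ∀ z : ZMod (g * (w * t)),
        z ∈ (nonHoleDiffs (g * w) t).map (c : ZMod (g * w * t) → ZMod (g * (w * t))) ↔
          ¬ t ∣ z.val := by
      intro z
      rw [Multiset.mem_map]
      constructor
      · rintro ⟨y, hy, rfl⟩
        rw [hcval]
        exact (mem_nonHoleDiffs hpos y).mp hy
      · intro hz
        refine ⟨c.symm z, ?_, c.apply_symm_apply z⟩
        rw [mem_nonHoleDiffs hpos]
        have hv := hcval (c.symm z)
        rw [c.apply_symm_apply] at hv
        rwa [← hv]
    have hmem2 : ∀ z : ZMod (g * (w * t)),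
        z ∈ (nonHoleDiffs g w).map φ ↔ t ∣ z.val ∧ ¬ (w * t) ∣ z.val := by
      intro z
      rw [Multiset.mem_map]
      constructor
      · rintro ⟨x, hx, rfl⟩
        rw [hφval]
        have hxw : ¬ w ∣ x.val := (mem_nonHoleDiffs hgw x).mp hx
        exact ⟨dvd_mul_left t x.val, fun hd => hxw ((Nat.mul_dvd_mul_iff_right ht).mp hd)⟩
      · rintro ⟨⟨u, hu⟩, hzw⟩
        have hzlt : z.val < g * (w * t) := ZMod.val_lt z
        have hult : u < g * w := by
          by_contra hult
          push_neg at hult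
          have : g * (w * t) ≤ t * u := by
            calc g * (w * t) = t * (g * w) := by ring
            _ ≤ t * u := Nat.mul_le_mul_left t hult
          omega
        refine ⟨(u : ZMod (g * w)), ?_, ?_⟩
        · rw [mem_nonHoleDiffs hgw, ZMod.val_cast_of_lt hult]
          rintro ⟨d, hd⟩
          exact hzw ⟨d, by rw [hu, hd]; ring⟩
        · refine ZMod.val_injective _ ?_
          rw [hφval, ZMod.val_cast_of_lt hult, hu, Nat.mul_comm]
    -- the partition identity
    have hpart : (nonHoleDiffs (g * w) t).map (c : ZMod (g * w * t) → ZMod (g * (w * t)))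
        + (nonHoleDiffs g w).map φ = nonHoleDiffs g (w * t) := by
      rw [Multiset.Nodup.ext ?_ (nodup_nonHoleDiffs g (w * t))]
      · intro z
        rw [Multiset.mem_add, hmem1, hmem2, mem_nonHoleDiffs hpos']
        constructor
        · rintro (h | ⟨_, h⟩)
          · exact fun hd => h ((dvd_mul_left t w).trans hd)
          · exact h
        · intro h
          by_cases hT : t ∣ z.val
          · exact Or.inr ⟨hT, h⟩
          · exact Or.inl hT
      · rw [Multiset.nodup_add]
        refine ⟨(nodup_nonHoleDiffs _ _).map hcinj, (nodup_nonHoleDiffs _ _).map hφinj, ?_⟩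
        rw [Multiset.disjoint_left]
        intro z hz1 hz2
        rw [hmem1] at hz1
        rw [hmem2] at hz2
        exact hz1 hz2.1
    refine ⟨B1.map (fun b => b.map ⟨Prod.map id c, injective_id.prodMap hcinj⟩)
        + B2.map (fun b => b.map ⟨Prod.map id φ, injective_id.prodMap hφinj⟩), ?_, ?_, ?_⟩
    · intro b hb
      rw [Multiset.mem_add] at hb
      rcases hb with hb | hb <;>
        obtain ⟨a, ha, rfl⟩ := Multiset.mem_map.mp hb <;> rw [Finset.card_map]
      exacts [hB1k a ha, hB2k a ha]
    · intro i j hij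
      rw [blockDelta_add, blockDelta_map _ _ hcinj hcsub, blockDelta_map _ _ hφinj hφsub,
        hB1d i j hij, hB2d i j hij, hpart]
    · intro i
      rw [blockDelta_add, blockDelta_map _ _ hcinj hcsub, blockDelta_map _ _ hφinj hφsub,
        hB1z i, hB2z i]
      simp
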